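/- Let n be a positive even natural number. The number of permutations of Fin n that contain some cycle of length strictly greater than n/2 equals ∑_{k=n/2+1}^{n} n!/k. Consequently, the proportion of permutations of Fin n containing a cycle of length greater than n/2 is ∑_{k=1}^{n/2} 1/(n/2 + k). -/

import Mathlib

/-- The orbit (cycle) of `i` under the permutation `σ` of `Fin n`, as a finset.
For `n ≥ 1` the powers `σ^0, …, σ^(n-1)` applied to `i` exhaust the orbit. -/
def cycleOf {n : ℕ} (σ : Equiv.Perm (Fin n)) (i : Fin n) : Finset (Fin n) :=
  (Finset.range n).image (fun k => (σ ^ k) i)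

open Finset Equiv

lemma mem_cycleOf_iff {n : ℕ} (hn : 0 < n) (σ : Equiv.Perm (Fin n)) (i j : Fin n) :
    j ∈ cycleOf σ i ↔ σ.SameCycle i j := by
  simp only [cycleOf, Finset.mem_image, Finset.mem_range]
  constructor
  · rintro ⟨k, _, rfl⟩
    exact ⟨(k : ℤ), by simp [zpow_natCast]⟩
  · intro h
    obtain ⟨p, _, _, hpj⟩ := h.exists_pow_eq σ
    by_cases hfix : σ i = i
    · refine ⟨0, hn, ?_⟩
      rw [pow_zero, ← hpj, Equiv.Perm.pow_apply_eq_self_of_apply_eq_self hfix]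
      rfl
    · have hc : 0 < (σ.cycleOf i).support.card := by
        rw [Finset.card_pos]
        exact ⟨i, Equiv.Perm.mem_support_cycleOf_iff.mpr
          ⟨Equiv.Perm.SameCycle.refl _ _, Equiv.Perm.mem_support.mpr hfix⟩⟩
      have hcn : (σ.cycleOf i).support.card ≤ n := by
        refine le_trans (Finset.card_le_univ _) ?_
        simp
      exact ⟨p % _, lt_of_lt_of_le (Nat.mod_lt _ hc) hcn, by
        rw [Equiv.Perm.pow_mod_card_support_cycleOf_self_apply]; exact hpj⟩

lemma cycleOf_eq_support {n : ℕ} (hn : 0 < n) (σ : Equiv.Perm (Fin n)) (i : Fin n)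
    (hi : i ∈ σ.support) : cycleOf σ i = (σ.cycleOf i).support := by
  ext j
  rw [mem_cycleOf_iff hn, Equiv.Perm.mem_support_cycleOf_iff]
  exact ⟨fun h => ⟨h, hi⟩, fun h => h.1⟩

lemma cycleOf_of_not_mem {n : ℕ} (hn : 0 < n) (σ : Equiv.Perm (Fin n)) (i : Fin n)
    (hi : i ∉ σ.support) : cycleOf σ i = {i} := by
  have hfix := Equiv.Perm.notMem_support.mp hi
  ext j
  rw [mem_cycleOf_iff hn, Finset.mem_singleton]
  constructor
  · rintro ⟨k, hk⟩
    rw [← hk, Equiv.Perm.zpow_apply_eq_self_of_apply_eq_self hfix]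
  · rintro rfl
    exact Equiv.Perm.SameCycle.refl _ _

lemma sameCycle_of_long {n : ℕ} (σ : Equiv.Perm (Fin n)) {x y : Fin n}
    (hsum : n < (σ.cycleOf x).support.card + (σ.cycleOf y).support.card) :
    σ.SameCycle x y := by
  by_contra hxy
  have hdisj : Disjoint (σ.cycleOf x).support (σ.cycleOf y).support := by
    rw [Finset.disjoint_left]
    intro z hzx hzy
    exact hxy ((Equiv.Perm.mem_support_cycleOf_iff.mp hzx).1.trans
      ((Equiv.Perm.mem_support_cycleOf_iff.mp hzy).1.symm)
    )
  have h1 := Finset.card_le_univ ((σ.cycleOf x).support ∪ (σ.cycleOf y).support)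
  rw [Finset.card_union_of_disjoint hdisj] at h1
  simp only [Finset.card_univ, Fintype.card_fin] at h1
  omega

lemma count_fixing {n : ℕ} (l : List (Fin n)) (hl : l.Nodup) :
    (univ.filter (fun ρ : Equiv.Perm (Fin n) => ∀ y ∈ l, ρ y = y)).card
      = (n - l.length).factorial := by
  classical
  rw [← Fintype.card_subtype]
  have e1 : {f : Equiv.Perm (Fin n) // ∀ y ∈ l, f y = y}
      ≃ {f : Equiv.Perm (Fin n) // ∀ a : Fin n, ¬ (a ∉ l) → f a = a} :=
    Equiv.subtypeEquivRight (fun f => by simp [not_not])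
  have e2 : {f : Equiv.Perm (Fin n) // ∀ a : Fin n, ¬ (a ∉ l) → f a = a}
      ≃ Equiv.Perm {a : Fin n // a ∉ l} :=
    (Equiv.Perm.subtypeEquivSubtypePerm (fun a => a ∉ l)).symm
  rw [Fintype.card_congr (e1.trans e2), Fintype.card_perm]
  congr 1
  rw [Fintype.card_subtype]
  have : (univ.filter (fun a : Fin n => a ∉ l)) = l.toFinsetᶜ := by
    ext a; simp [List.mem_toFinset]
  rw [this, Finset.card_compl, List.toFinset_card_of_nodup hl, Fintype.card_fin]

lemma fiber_g {n k : ℕ} (hk2 : 2 ≤ k) (g : Fin k → Fin n) (hg : Function.Injective g) :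
    (univ.filter (fun p : Equiv.Perm (Fin n) × Fin n =>
        (p.2 ∈ p.1.support ∧ (p.1.cycleOf p.2).support.card = k) ∧
        (fun i : Fin k => (p.1 ^ (i : ℕ)) p.2) = g)).card
      = (n - k).factorial := by
  classical
  have k0 : 0 < k := by omega
  set l : List (Fin n) := List.ofFn g with hldef
  have hlen : l.length = k := List.length_ofFn
  have hl : l.Nodup := List.nodup_ofFn.mpr hg
  have hget : ∀ (i : ℕ) (h : i < k), l[i]'(by omega) = g ⟨i, h⟩ := by
    intro i h
    rw [List.getElem_ofFn]
  -- key fact A : a member of the fiber agrees with formPerm l on l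
  have hA : ∀ (σ : Equiv.Perm (Fin n)) (x : Fin n), x ∈ σ.support →
      (σ.cycleOf x).support.card = k → (∀ i : Fin k, (σ ^ (i : ℕ)) x = g i) →
      ∀ y ∈ l, σ y = l.formPerm y := by
    intro σ x hx hcard hfor
    have hpow : ∀ p : ℕ, (σ ^ p) x = l[p % k]'(by rw [hlen]; exact Nat.mod_lt _ k0) := by
      intro p
      have h1 : (σ ^ (p % (σ.cycleOf x).support.card)) x = (σ ^ p) x :=
        Equiv.Perm.pow_mod_card_support_cycleOf_self_apply σ p x
      rw [hcard] at h1
      rw [← h1, hget _ (Nat.mod_lt _ k0)]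
      exact hfor ⟨p % k, Nat.mod_lt _ k0⟩
    intro y hy
    obtain ⟨i, hil, rfl⟩ := List.mem_iff_getElem.mp hy
    have hik : i < k := by omega
    have hi1 : l[i] = (σ ^ i) x := by
      rw [hpow i]
      congr 1
      exact (Nat.mod_eq_of_lt hik).symm
    have h2 : σ l[i] = (σ ^ (i + 1)) x := by
      rw [hi1, ← Equiv.Perm.mul_apply, ← pow_succ']
    have h3 : l.formPerm l[i] = l[(i + 1) % l.length]'(Nat.mod_lt _ (by omega)) := by
      have := List.formPerm_pow_apply_getElem l hl 1 i hil
      rwa [pow_one] at this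
    rw [h2, h3, hpow (i+1)]
    congr 1
    rw [hlen]
  -- key fact B : powers of formPerm l * ρ trace out l
  have hB : ∀ (ρ : Equiv.Perm (Fin n)), (∀ y ∈ l, ρ y = y) → ∀ p : ℕ,
      ((l.formPerm * ρ) ^ p) (g ⟨0, k0⟩) = l[p % k]'(by rw [hlen]; exact Nat.mod_lt _ k0) := by
    intro ρ hρ p
    induction p with
    | zero => simp [Nat.zero_mod, hget 0 k0]
    | succ p ih =>
      rw [pow_succ', Equiv.Perm.mul_apply, ih, Equiv.Perm.mul_apply,
        hρ _ (List.getElem_mem _)]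
      have h3 := List.formPerm_pow_apply_getElem l hl 1 (p % k) (by rw [hlen]; exact Nat.mod_lt _ k0)
      rw [pow_one] at h3
      rw [h3]
      have hmod : (p % k + 1) % l.length = (p + 1) % k := by
        rw [hlen]
        conv_rhs => rw [Nat.add_mod p 1 k, Nat.one_mod_eq_one.mpr (by omega)]
      simp only [hmod]
  -- membership of the reconstructed pair
  have hBmem : ∀ (ρ : Equiv.Perm (Fin n)), (∀ y ∈ l, ρ y = y) →
      (g ⟨0, k0⟩ ∈ (l.formPerm * ρ).support ∧
        ((l.formPerm * ρ).cycleOf (g ⟨0, k0⟩)).support.card = k) ∧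
      (fun i : Fin k => ((l.formPerm * ρ) ^ (i : ℕ)) (g ⟨0, k0⟩)) = g := by
    intro ρ hρ
    set σ := l.formPerm * ρ with hσ
    have hfor : ∀ i : Fin k, (σ ^ (i : ℕ)) (g ⟨0, k0⟩) = g i := by
      intro i
      rw [hB ρ hρ (i : ℕ)]
      have : (i : ℕ) % k = (i : ℕ) := Nat.mod_eq_of_lt i.isLt
      simp only [this]
      rw [hget _ i.isLt]
    have hsupp : g ⟨0, k0⟩ ∈ σ.support := by
      rw [Equiv.Perm.mem_support]
      have h1 : σ (g ⟨0, k0⟩) = g ⟨1, by omega⟩ := by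
        have := hfor ⟨1, by omega⟩
        rwa [pow_one] at this
      rw [h1]
      intro hcon
      have := hg hcon
      simp at this
    refine ⟨⟨hsupp, ?_⟩, funext hfor⟩
    have hset : (σ.cycleOf (g ⟨0, k0⟩)).support = l.toFinset := by
      ext z
      rw [Equiv.Perm.mem_support_cycleOf_iff, List.mem_toFinset]
      constructor
      · rintro ⟨hsc, -⟩
        obtain ⟨p, -, -, hp⟩ := hsc.exists_pow_eq σ
        rw [hB ρ hρ p] at hp
        rw [← hp]
        exact List.getElem_mem _
      · intro hz
        obtain ⟨i, hil, rfl⟩ := List.mem_iff_getElem.mp hz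
        refine ⟨⟨(i : ℤ), ?_⟩, hsupp⟩
        rw [zpow_natCast, hB ρ hρ i]
        congr 1
        exact Nat.mod_eq_of_lt (by omega)
    rw [hset, List.toFinset_card_of_nodup hl, hlen]
  -- the bijection with permutations fixing l
  have hcf := count_fixing l hl
  rw [hlen] at hcf
  rw [← hcf]
  apply Finset.card_bij' (fun p _ => l.formPerm⁻¹ * p.1)
    (fun ρ _ => (l.formPerm * ρ, g ⟨0, k0⟩))
  · intro p hp
    simp only [Finset.mem_filter, Finset.mem_univ, true_and] at hp ⊢
    obtain ⟨⟨hsupp, hcard⟩, hfor⟩ := hp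
    intro y hy
    have := hA p.1 p.2 hsupp hcard (fun i => congrFun hfor i) y hy
    rw [Equiv.Perm.mul_apply, this, Equiv.Perm.inv_def, Equiv.symm_apply_apply]
  · intro ρ hρ
    simp only [Finset.mem_filter, Finset.mem_univ, true_and] at hρ ⊢
    exact hBmem ρ hρ
  · intro p hp
    simp only [Finset.mem_filter, Finset.mem_univ, true_and] at hp
    obtain ⟨⟨hsupp, hcard⟩, hfor⟩ := hp
    have hx : p.2 = g ⟨0, k0⟩ := by
      have := congrFun hfor ⟨0, k0⟩
      simpa using this
    ext
    · simp [mul_inv_cancel_left]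
    · exact congrArg Fin.val hx.symm
  · intro ρ hρ
    simp [inv_mul_cancel_left]

lemma sameCycle_of_long' {n : ℕ} (σ : Equiv.Perm (Fin n)) {x y : Fin n} {k : ℕ}
    (hlong : n < 2 * k)
    (hcx : (σ.cycleOf x).support.card = k) (hcy : (σ.cycleOf y).support.card = k) :
    σ.SameCycle x y :=
  sameCycle_of_long σ (by omega)
set_option maxHeartbeats 2000000 in
lemma countA {n k : ℕ} (hk2 : 2 ≤ k) (hkn : k ≤ n) (hlong : n < 2 * k) :
    (univ.filter (fun σ : Equiv.Perm (Fin n) =>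
        ∃ x, x ∈ σ.support ∧ (σ.cycleOf x).support.card = k)).card * k = n.factorial := by
  classical
  have h1 : (univ.filter (fun p : Equiv.Perm (Fin n) × Fin n =>
      p.2 ∈ p.1.support ∧ (p.1.cycleOf p.2).support.card = k)).card
      = (univ.filter (fun σ : Equiv.Perm (Fin n) =>
        ∃ x, x ∈ σ.support ∧ (σ.cycleOf x).support.card = k)).card * k := by
    have hmaps : ∀ p ∈ (univ.filter (fun p : Equiv.Perm (Fin n) × Fin n =>
        p.2 ∈ p.1.support ∧ (p.1.cycleOf p.2).support.card = k)),
        p.1 ∈ (univ.filter (fun σ : Equiv.Perm (Fin n) =>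
          ∃ x, x ∈ σ.support ∧ (σ.cycleOf x).support.card = k)) := by
      intro p hp
      simp only [Finset.mem_filter, Finset.mem_univ, true_and] at hp ⊢
      exact ⟨p.2, hp⟩
    rw [Finset.card_eq_sum_card_fiberwise hmaps]
    rw [Finset.sum_congr rfl ?_, Finset.sum_const, smul_eq_mul]
    intro σ hσ
    simp only [Finset.mem_filter, Finset.mem_univ, true_and] at hσ
    obtain ⟨x, hx, hcard⟩ := hσ
    have hbij : ((univ.filter (fun p : Equiv.Perm (Fin n) × Fin n =>
        p.2 ∈ p.1.support ∧ (p.1.cycleOf p.2).support.card = k)).filter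
          (fun p => p.1 = σ)).card = ((σ.cycleOf x).support).card := by
      refine Finset.card_bij' (fun p _ => p.2) (fun y _ => (σ, y)) ?hi ?hj ?left ?right
      case hi =>
        intro p hp
        simp only [Finset.mem_filter, Finset.mem_univ, true_and] at hp
        obtain ⟨⟨hps, hpc⟩, hp1⟩ := hp
        rw [Equiv.Perm.mem_support_cycleOf_iff]
        rw [hp1] at hpc
        exact ⟨sameCycle_of_long' σ hlong hcard hpc, hx⟩
      case hj =>
        intro y hy
        have hmem := Equiv.Perm.mem_support_cycleOf_iff.mp hy
        simp only [Finset.mem_filter, Finset.mem_univ, true_and]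
        refine ⟨⟨Equiv.Perm.support_cycleOf_le σ x hy, ?_⟩, trivial⟩
        rw [← hmem.1.cycleOf_eq]
        exact hcard
      case left =>
        intro p hp
        simp only [Finset.mem_filter, Finset.mem_univ, true_and] at hp
        exact Prod.ext hp.2.symm rfl
      case right =>
        intro y hy
        rfl
    rw [hbij, hcard]
  have h2 : (univ.filter (fun p : Equiv.Perm (Fin n) × Fin n =>
      p.2 ∈ p.1.support ∧ (p.1.cycleOf p.2).support.card = k)).card = n.factorial := by
    have hmaps : ∀ p ∈ (univ.filter (fun p : Equiv.Perm (Fin n) × Fin n =>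
        p.2 ∈ p.1.support ∧ (p.1.cycleOf p.2).support.card = k)),
        (fun i : Fin k => (p.1 ^ (i : ℕ)) p.2)
          ∈ (univ.filter (fun g : Fin k → Fin n => Function.Injective g)) := by
      intro p hp
      simp only [Finset.mem_filter, Finset.mem_univ, true_and] at hp ⊢
      obtain ⟨hps, hpc⟩ := hp
      intro i j hij
      have hlen : (p.1.toList p.2).length = k := by
        rw [Equiv.Perm.length_toList, hpc]
      have hgi := Equiv.Perm.getElem_toList p.1 p.2 i (by omega)
      have hgj := Equiv.Perm.getElem_toList p.1 p.2 j (by omega)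
      have hg2 : (p.1.toList p.2).get ⟨(i : ℕ), by omega⟩
          = (p.1.toList p.2).get ⟨(j : ℕ), by omega⟩ := by
        rw [List.get_eq_getElem, List.get_eq_getElem, hgi, hgj]; exact hij
      have h4 := (Equiv.Perm.nodup_toList p.1 p.2).get_inj_iff.mp hg2
      have h5 : (i : ℕ) = (j : ℕ) := by simpa using congrArg Fin.val h4
      exact Fin.ext h5
    rw [Finset.card_eq_sum_card_fiberwise hmaps]
    rw [Finset.sum_congr rfl ?_, Finset.sum_const, smul_eq_mul]
    · have ht : (univ.filter (fun g : Fin k → Fin n => Function.Injective g)).card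
          = n.descFactorial k := by
        rw [← Fintype.card_subtype,
          Fintype.card_congr (Equiv.subtypeInjectiveEquivEmbedding (Fin k) (Fin n)),
          Fintype.card_embedding_eq, Fintype.card_fin, Fintype.card_fin]
      rw [ht, Nat.descFactorial_eq_div hkn,
        Nat.div_mul_cancel (Nat.factorial_dvd_factorial (Nat.sub_le n k))]
    · intro g hg
      simp only [Finset.mem_filter, Finset.mem_univ, true_and] at hg
      rw [Finset.filter_filter]
      exact fiber_g hk2 g hg
  rw [← h1, h2]


/-- For `n` even and positive, the number of permutations of `Fin n` containing a cycle
of length strictly greater than `n/2` equals `∑_{k=n/2+1}^{n} n!/k`; consequently the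
proportion of such permutations is `∑_{k=1}^{n/2} 1/(n/2 + k)`. -/
theorem card_and_proportion_long_cycle (n : ℕ) (hn : 0 < n) (hne : Even n) :
    (Finset.univ.filter
        (fun σ : Equiv.Perm (Fin n) => ∃ i : Fin n, n / 2 < (cycleOf σ i).card)).card
      = ∑ k ∈ Finset.Icc (n / 2 + 1) n, n.factorial / k
    ∧
    ((Finset.univ.filter
        (fun σ : Equiv.Perm (Fin n) => ∃ i : Fin n, n / 2 < (cycleOf σ i).card)).card : ℝ)
        / (n.factorial : ℝ)
      = ∑ k ∈ Finset.Icc 1 (n / 2), (1 : ℝ) / ((n / 2 + k : ℕ) : ℝ) := by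
  classical
  have hev : 2 * (n / 2) = n := by
    obtain ⟨m, hm⟩ := hne
    omega
  have hn2 : 2 ≤ n := by
    obtain ⟨m, hm⟩ := hne
    omega
  have hsplit : (Finset.univ.filter
      (fun σ : Equiv.Perm (Fin n) => ∃ i : Fin n, n / 2 < (cycleOf σ i).card))
      = (Finset.Icc (n / 2 + 1) n).biUnion (fun k =>
          Finset.univ.filter (fun σ : Equiv.Perm (Fin n) =>
            ∃ x, x ∈ σ.support ∧ (σ.cycleOf x).support.card = k)) := by
    ext σ
    simp only [Finset.mem_filter, Finset.mem_univ, true_and, Finset.mem_biUnion,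
      Finset.mem_Icc]
    constructor
    · rintro ⟨i, hi⟩
      have hisupp : i ∈ σ.support := by
        by_contra hcon
        rw [cycleOf_of_not_mem hn σ i hcon] at hi
        simp at hi
        omega
      have heq := cycleOf_eq_support hn σ i hisupp
      rw [heq] at hi
      refine ⟨(σ.cycleOf i).support.card, ⟨by omega, ?_⟩, i, hisupp, rfl⟩
      exact le_trans (Finset.card_le_univ _) (by simp)
    · rintro ⟨k, ⟨hk1, hk2⟩, x, hx, hcard⟩
      refine ⟨x, ?_⟩
      rw [cycleOf_eq_support hn σ x hx, hcard]
      omega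
  have hdisj : ∀ k₁ ∈ Finset.Icc (n / 2 + 1) n, ∀ k₂ ∈ Finset.Icc (n / 2 + 1) n, k₁ ≠ k₂ →
      Disjoint (Finset.univ.filter (fun σ : Equiv.Perm (Fin n) =>
          ∃ x, x ∈ σ.support ∧ (σ.cycleOf x).support.card = k₁))
        (Finset.univ.filter (fun σ : Equiv.Perm (Fin n) =>
          ∃ x, x ∈ σ.support ∧ (σ.cycleOf x).support.card = k₂)) := by
    intro k₁ hk₁ k₂ hk₂ hne'
    simp only [Finset.mem_Icc] at hk₁ hk₂
    rw [Finset.disjoint_left]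
    intro σ h₁ h₂
    simp only [Finset.mem_filter, Finset.mem_univ, true_and] at h₁ h₂
    obtain ⟨x, hx, hcx⟩ := h₁
    obtain ⟨y, hy, hcy⟩ := h₂
    have hsc : σ.SameCycle x y := sameCycle_of_long σ (by omega)
    rw [hsc.cycleOf_eq] at hcx
    omega
  have hcardA : ∀ k ∈ Finset.Icc (n / 2 + 1) n,
      (Finset.univ.filter (fun σ : Equiv.Perm (Fin n) =>
        ∃ x, x ∈ σ.support ∧ (σ.cycleOf x).support.card = k)).card = n.factorial / k := by
    intro k hk
    simp only [Finset.mem_Icc] at hk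
    have hc := countA (n := n) (k := k) (by omega) hk.2 (by omega)
    rw [← hc, Nat.mul_div_cancel _ (by omega : 0 < k)]
  have hpart1 : (Finset.univ.filter
      (fun σ : Equiv.Perm (Fin n) => ∃ i : Fin n, n / 2 < (cycleOf σ i).card)).card
      = ∑ k ∈ Finset.Icc (n / 2 + 1) n, n.factorial / k := by
    rw [hsplit, Finset.card_biUnion hdisj]
    exact Finset.sum_congr rfl hcardA
  refine ⟨hpart1, ?_⟩
  rw [hpart1]
  have hfne : (n.factorial : ℝ) ≠ 0 := Nat.cast_ne_zero.mpr n.factorial_ne_zero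
  have hterm : ∀ k ∈ Finset.Icc (n / 2 + 1) n,
      ((n.factorial / k : ℕ) : ℝ) = (n.factorial : ℝ) * (1 / (k : ℝ)) := by
    intro k hk
    simp only [Finset.mem_Icc] at hk
    have hdvd : k ∣ n.factorial := Nat.dvd_factorial (by omega) hk.2
    rw [Nat.cast_div hdvd (by exact_mod_cast (by omega : k ≠ 0))]
    ring
  rw [Nat.cast_sum, Finset.sum_congr rfl hterm, ← Finset.mul_sum,
    mul_comm, mul_div_assoc, div_self hfne, mul_one]
  refine Finset.sum_nbij' (i := fun k => k - n / 2) (j := fun k => n / 2 + k) ?_ ?_ ?_ ?_ ?_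
  · intro a ha
    simp only [Finset.mem_Icc] at ha ⊢
    omega
  · intro a ha
    simp only [Finset.mem_Icc] at ha ⊢
    omega
  · intro a ha
    simp only [Finset.mem_Icc] at ha
    show n / 2 + (a - n / 2) = a
    omega
  · intro a ha
    simp only [Finset.mem_Icc] at ha
    show n / 2 + a - n / 2 = a
    omega
  · intro a ha
    simp only [Finset.mem_Icc] at ha
    show (1 : ℝ) / ((a : ℕ) : ℝ) = 1 / ((n / 2 + (a - n / 2) : ℕ) : ℝ)
    congr 2
    omega
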